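/- Let p > 3 be prime. If C is a finite set of nonzero Markoff triples mod p closed under all three Vieta involutions, then in F_p one has |C| = (3/2)*|C|, where |C| is reduced mod p, by summing the Penner-type coordinates y1 + y2 + y3 = 1 over C and exchanging the order of summation. -/

import Mathlib

def Markoff (p : ℕ) (x : ZMod p × ZMod p × ZMod p) : Prop :=
  x.1^2 + x.2.1^2 + x.2.2^2 = 3 * x.1 * x.2.1 * x.2.2

def vieta1 (p : ℕ) (x : ZMod p × ZMod p × ZMod p) : ZMod p × ZMod p × ZMod p :=
  (3 * x.2.1 * x.2.2 - x.1, x.2.1, x.2.2)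

def vieta2 (p : ℕ) (x : ZMod p × ZMod p × ZMod p) : ZMod p × ZMod p × ZMod p :=
  (x.1, 3 * x.1 * x.2.2 - x.2.1, x.2.2)

def vieta3 (p : ℕ) (x : ZMod p × ZMod p × ZMod p) : ZMod p × ZMod p × ZMod p :=
  (x.1, x.2.1, 3 * x.1 * x.2.1 - x.2.2)

def y1 (p : ℕ) [Fact p.Prime] (x : ZMod p × ZMod p × ZMod p) : ZMod p :=
  if x.1 * x.2.1 * x.2.2 ≠ 0 then x.1 / (3 * x.2.1 * x.2.2)
  else if x.1 = 0 then 0 else 1/2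

def y2 (p : ℕ) [Fact p.Prime] (x : ZMod p × ZMod p × ZMod p) : ZMod p :=
  if x.1 * x.2.1 * x.2.2 ≠ 0 then x.2.1 / (3 * x.1 * x.2.2)
  else if x.2.1 = 0 then 0 else 1/2

def y3 (p : ℕ) [Fact p.Prime] (x : ZMod p × ZMod p × ZMod p) : ZMod p :=
  if x.1 * x.2.1 * x.2.2 ≠ 0 then x.2.2 / (3 * x.1 * x.2.1)
  else if x.2.2 = 0 then 0 else 1/2

section Aux

variable (p : ℕ) [Fact p.Prime]

lemma aux_two_ne (hp : 3 < p) : (2 : ZMod p) ≠ 0 := by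
  have : ((2 : ℕ) : ZMod p) ≠ 0 := by
    rw [Ne, ZMod.natCast_eq_zero_iff]
    intro h
    have := Nat.le_of_dvd (by norm_num) h
    omega
  simpa using this

lemma aux_three_ne (hp : 3 < p) : (3 : ZMod p) ≠ 0 := by
  have : ((3 : ℕ) : ZMod p) ≠ 0 := by
    rw [Ne, ZMod.natCast_eq_zero_iff]
    intro h
    have := Nat.le_of_dvd (by norm_num) h
    omega
  simpa using this

/-- scalar version of the `y` functions -/
def Y (a b c : ZMod p) : ZMod p :=
  if a * b * c ≠ 0 then a / (3 * b * c) else if a = 0 then 0 else 1/2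

lemma aux_cases {a b c : ZMod p} (hM : a^2 + b^2 + c^2 = 3*a*b*c)
    (hnz : ¬(a = 0 ∧ b = 0 ∧ c = 0)) :
    (a ≠ 0 ∧ b ≠ 0 ∧ c ≠ 0) ∨ (a = 0 ∧ b ≠ 0 ∧ c ≠ 0) ∨
    (b = 0 ∧ a ≠ 0 ∧ c ≠ 0) ∨ (c = 0 ∧ a ≠ 0 ∧ b ≠ 0) := by
  have hab : a = 0 → b = 0 → c = 0 := by
    rintro rfl rfl
    have : c^2 = 0 := by linear_combination hM
    exact pow_eq_zero_iff (by norm_num) |>.mp this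
  have hac : a = 0 → c = 0 → b = 0 := by
    rintro rfl rfl
    have : b^2 = 0 := by linear_combination hM
    exact pow_eq_zero_iff (by norm_num) |>.mp this
  have hbc : b = 0 → c = 0 → a = 0 := by
    rintro rfl rfl
    have : a^2 = 0 := by linear_combination hM
    exact pow_eq_zero_iff (by norm_num) |>.mp this
  tauto

lemma Y_zero (b c : ZMod p) : Y p 0 b c = 0 := by simp [Y]

lemma Y_half {a b c : ZMod p} (ha : a ≠ 0) (h : b = 0 ∨ c = 0) : Y p a b c = 1/2 := by
  have hz : a * b * c = 0 := by rcases h with h | h <;> simp [h]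
  simp [Y, hz, ha]

lemma Y_full {a b c : ZMod p} (h : a * b * c ≠ 0) : Y p a b c = a / (3 * b * c) := by
  simp [Y, h]

lemma aux_half (hp : 3 < p) : (1/2 + 1/2 : ZMod p) = 1 := by
  rw [← add_div, show (1 : ZMod p) + 1 = 2 by norm_num, div_self (aux_two_ne p hp)]

lemma aux_Y_sum (hp : 3 < p) {a b c : ZMod p} (hM : a^2 + b^2 + c^2 = 3*a*b*c)
    (hnz : ¬(a = 0 ∧ b = 0 ∧ c = 0)) :
    Y p a b c + Y p b a c + Y p c a b = 1 := by
  have h3 := aux_three_ne p hp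
  have half := aux_half p hp
  rcases aux_cases p hM hnz with ⟨ha, hb, hc⟩ | ⟨ha, hb, hc⟩ | ⟨hb, ha, hc⟩ | ⟨hc, ha, hb⟩
  · have habc : a * b * c ≠ 0 := by simp [ha, hb, hc]
    have hbac : b * a * c ≠ 0 := by simp [ha, hb, hc]
    have hcab : c * a * b ≠ 0 := by simp [ha, hb, hc]
    rw [Y_full p habc, Y_full p hbac, Y_full p hcab]
    have hD : (3 : ZMod p) * (a*b*c) ≠ 0 := by simp [h3, ha, hb, hc]
    have t1 : a/(3*b*c) = a^2/(3*(a*b*c)) := by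
      rw [div_eq_div_iff (by simp [h3, hb, hc]) hD]; ring
    have t2 : b/(3*a*c) = b^2/(3*(a*b*c)) := by
      rw [div_eq_div_iff (by simp [h3, ha, hc]) hD]; ring
    have t3 : c/(3*a*b) = c^2/(3*(a*b*c)) := by
      rw [div_eq_div_iff (by simp [h3, ha, hb]) hD]; ring
    have e : a/(3*b*c) + b/(3*a*c) + c/(3*a*b) = (a^2 + b^2 + c^2)/(3*(a*b*c)) := by
      rw [t1, t2, t3, ← add_div, ← add_div]
    rw [e, hM, show (3 : ZMod p)*a*b*c = 3*(a*b*c) from by ring]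
    exact div_self (by simp [h3, ha, hb, hc])
  · subst ha
    rw [Y_zero, Y_half p hb (Or.inl rfl), Y_half p hc (Or.inl rfl), zero_add]
    exact half
  · subst hb
    rw [Y_half p ha (Or.inl rfl), Y_zero, Y_half p hc (Or.inr rfl), add_zero]
    exact half
  · subst hc
    rw [Y_half p ha (Or.inr rfl), Y_half p hb (Or.inr rfl), Y_zero, add_zero]
    exact half

lemma aux_Y_flip (hp : 3 < p) {a b c : ZMod p} (hM : a^2 + b^2 + c^2 = 3*a*b*c)
    (hnz : ¬(a = 0 ∧ b = 0 ∧ c = 0)) :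
    Y p a b c + Y p (3*b*c - a) b c = 1 := by
  have h3 := aux_three_ne p hp
  have half := aux_half p hp
  rcases aux_cases p hM hnz with ⟨ha, hb, hc⟩ | ⟨ha, hb, hc⟩ | ⟨hb, ha, hc⟩ | ⟨hc, ha, hb⟩
  · have habc : a * b * c ≠ 0 := by simp [ha, hb, hc]
    have h3bc : (3 : ZMod p) * b * c ≠ 0 := by simp [h3, hb, hc]
    by_cases hv : 3*b*c - a = 0
    · rw [Y_full p habc, hv, Y_zero, add_zero,
        show a = 3*b*c from by linear_combination -hv]
      exact div_self h3bc
    · rw [Y_full p habc, Y_full p (show (3*b*c - a)*b*c ≠ 0 from by simp [hv, hb, hc]),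
        ← add_div, show a + (3*b*c - a) = 3*b*c from by ring]
      exact div_self h3bc
  · subst ha
    have h3bc : (3 : ZMod p) * b * c ≠ 0 := by simp [h3, hb, hc]
    rw [Y_zero, zero_add, sub_zero, Y_full p (by simp [h3, hb, hc]), div_self h3bc]
  · subst hb
    rw [show (3 : ZMod p) * 0 * c - a = -a from by ring,
      Y_half p ha (Or.inl rfl), Y_half p (neg_ne_zero.mpr ha) (Or.inl rfl)]
    exact half
  · subst hc
    rw [show (3 : ZMod p) * b * 0 - a = -a from by ring,
      Y_half p ha (Or.inr rfl), Y_half p (neg_ne_zero.mpr ha) (Or.inr rfl)]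
    exact half

lemma y1_eq (x : ZMod p × ZMod p × ZMod p) : y1 p x = Y p x.1 x.2.1 x.2.2 := rfl

lemma y2_eq (x : ZMod p × ZMod p × ZMod p) : y2 p x = Y p x.2.1 x.1 x.2.2 := by
  simp only [y2, Y, show x.2.1 * x.1 * x.2.2 = x.1 * x.2.1 * x.2.2 from by ring]

lemma y3_eq (x : ZMod p × ZMod p × ZMod p) : y3 p x = Y p x.2.2 x.1 x.2.1 := by
  simp only [y3, Y, show x.2.2 * x.1 * x.2.1 = x.1 * x.2.1 * x.2.2 from by ring]

lemma aux_nz {x : ZMod p × ZMod p × ZMod p} (h : x ≠ (0,0,0)) :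
    ¬(x.1 = 0 ∧ x.2.1 = 0 ∧ x.2.2 = 0) := by
  rintro ⟨h1, h2, h3⟩
  exact h (by ext <;> simp [h1, h2, h3])

end Aux

theorem stmt14 (p : ℕ) [Fact p.Prime] (hp : 3 < p)
    (C : Finset (ZMod p × ZMod p × ZMod p))
    (hM : ∀ x ∈ C, Markoff p x) (hnz : ∀ x ∈ C, x ≠ (0, 0, 0))
    (h1 : ∀ x ∈ C, vieta1 p x ∈ C) (h2 : ∀ x ∈ C, vieta2 p x ∈ C)
    (h3 : ∀ x ∈ C, vieta3 p x ∈ C) :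
    (C.card : ZMod p) = (3 / 2 : ZMod p) * (C.card : ZMod p) := by
  have h2ne := aux_two_ne p hp
  -- the three partial sums
  set S1 := ∑ x ∈ C, y1 p x with hS1
  set S2 := ∑ x ∈ C, y2 p x with hS2
  set S3 := ∑ x ∈ C, y3 p x with hS3
  -- reindexing along the involutions
  have inv1 : ∀ x, vieta1 p (vieta1 p x) = x := by
    intro x; simp [vieta1]
  have inv2 : ∀ x, vieta2 p (vieta2 p x) = x := by
    intro x; simp [vieta2]
  have inv3 : ∀ x, vieta3 p (vieta3 p x) = x := by
    intro x; simp [vieta3]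
  have e1 : S1 = ∑ x ∈ C, y1 p (vieta1 p x) := by
    rw [hS1]
    exact Finset.sum_nbij' (i := vieta1 p) (j := vieta1 p) h1 h1
      (fun a _ => inv1 a) (fun a _ => inv1 a)
      (fun a _ => by rw [inv1])
  have e2 : S2 = ∑ x ∈ C, y2 p (vieta2 p x) := by
    rw [hS2]
    exact Finset.sum_nbij' (i := vieta2 p) (j := vieta2 p) h2 h2
      (fun a _ => inv2 a) (fun a _ => inv2 a)
      (fun a _ => by rw [inv2])
  have e3 : S3 = ∑ x ∈ C, y3 p (vieta3 p x) := by
    rw [hS3]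
    exact Finset.sum_nbij' (i := vieta3 p) (j := vieta3 p) h3 h3
      (fun a _ => inv3 a) (fun a _ => inv3 a)
      (fun a _ => by rw [inv3])
  -- doubling identities
  have T1 : 2 * S1 = (C.card : ZMod p) := by
    have : S1 + S1 = ∑ x ∈ C, (1 : ZMod p) := by
      nth_rewrite 2 [e1]
      rw [hS1, ← Finset.sum_add_distrib]
      refine Finset.sum_congr rfl fun x hx => ?_
      rw [y1_eq, y1_eq]
      exact aux_Y_flip p hp (hM x hx) (aux_nz p (hnz x hx))
    rw [two_mul, this, Finset.sum_const, nsmul_eq_mul, mul_one]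
  have T2 : 2 * S2 = (C.card : ZMod p) := by
    have : S2 + S2 = ∑ x ∈ C, (1 : ZMod p) := by
      nth_rewrite 2 [e2]
      rw [hS2, ← Finset.sum_add_distrib]
      refine Finset.sum_congr rfl fun x hx => ?_
      rw [y2_eq, y2_eq]
      have hMx : x.2.1^2 + x.1^2 + x.2.2^2 = 3 * x.2.1 * x.1 * x.2.2 := by
        have := hM x hx; unfold Markoff at this; linear_combination this
      have hnzx : ¬(x.2.1 = 0 ∧ x.1 = 0 ∧ x.2.2 = 0) := by
        have := aux_nz p (hnz x hx); tauto
      have := aux_Y_flip p hp hMx hnzx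
      simpa [vieta2, Y] using this
    rw [two_mul, this, Finset.sum_const, nsmul_eq_mul, mul_one]
  have T3 : 2 * S3 = (C.card : ZMod p) := by
    have : S3 + S3 = ∑ x ∈ C, (1 : ZMod p) := by
      nth_rewrite 2 [e3]
      rw [hS3, ← Finset.sum_add_distrib]
      refine Finset.sum_congr rfl fun x hx => ?_
      rw [y3_eq, y3_eq]
      have hMx : x.2.2^2 + x.1^2 + x.2.1^2 = 3 * x.2.2 * x.1 * x.2.1 := by
        have := hM x hx; unfold Markoff at this; linear_combination this
      have hnzx : ¬(x.2.2 = 0 ∧ x.1 = 0 ∧ x.2.1 = 0) := by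
        have := aux_nz p (hnz x hx); tauto
      have := aux_Y_flip p hp hMx hnzx
      simpa [vieta3, Y] using this
    rw [two_mul, this, Finset.sum_const, nsmul_eq_mul, mul_one]
  -- total sum identity
  have U : S1 + S2 + S3 = (C.card : ZMod p) := by
    have : S1 + S2 + S3 = ∑ x ∈ C, (1 : ZMod p) := by
      rw [hS1, hS2, hS3, ← Finset.sum_add_distrib, ← Finset.sum_add_distrib]
      refine Finset.sum_congr rfl fun x hx => ?_
      rw [y1_eq, y2_eq, y3_eq]
      exact aux_Y_sum p hp (hM x hx) (aux_nz p (hnz x hx))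
    rw [this, Finset.sum_const, nsmul_eq_mul, mul_one]
  -- conclude: 2|C| = 2(S1+S2+S3) = 3|C|
  have key : 2 * (C.card : ZMod p) = 3 * (C.card : ZMod p) := by
    calc 2 * (C.card : ZMod p) = 2 * S1 + 2 * S2 + 2 * S3 := by
          rw [← U]; ring
      _ = 3 * (C.card : ZMod p) := by rw [T1, T2, T3]; ring
  calc (C.card : ZMod p) = (2 : ZMod p)⁻¹ * (2 * (C.card : ZMod p)) := by
        rw [← mul_assoc, inv_mul_cancel₀ h2ne, one_mul]
    _ = (2 : ZMod p)⁻¹ * (3 * (C.card : ZMod p)) := by rw [key]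
    _ = (3 / 2 : ZMod p) * (C.card : ZMod p) := by rw [div_eq_mul_inv]; ring
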